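/- For every positive integer n, the two expressions for the binomial Eulerian polynomial agree: 1 + t·Σ_{m=1}^n C(n,m) A_m(t) = Σ_{m=0}^n C(n,m) t^{n−m} A_m(t), where A_m(t) is the Eulerian polynomial of the symmetric group S_m and A_0(t) := 1. -/

import Mathlib

open Polynomial Finset

/-- The value of the permutation `w` of `[m] = {1,…,m}` at the (1-based) position `k`,
with the convention that positions outside `[1,m]` take the value `m+1`. -/
def pVal {m : ℕ} (w : Equiv.Perm (Fin m)) (k : ℕ) : ℕ :=
  if h : 1 ≤ k ∧ k ≤ m then (w ⟨k - 1, by omega⟩ : ℕ) + 1 else m + 1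

/-- The descent set of a permutation `w` of `[m]`: the set of `i ∈ [m−1]` with
`w(i) > w(i+1)`. -/
def pDesSet {m : ℕ} (w : Equiv.Perm (Fin m)) : Finset ℕ :=
  (Finset.Icc 1 (m - 1)).filter fun i => pVal w (i + 1) < pVal w i

/-- The Eulerian polynomial `A_m(t) = Σ_{w ∈ S_m} t^{des(w)}` (with `A_0(t) = 1`). -/
noncomputable def eulerianPoly (m : ℕ) : ℤ[X] :=
  ∑ w : Equiv.Perm (Fin m), X ^ (pDesSet w).card

namespace BE

def valN {m : ℕ} (w : Equiv.Perm (Fin m)) (j : ℕ) : ℕ := pVal w (j + 1)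
lemma valN_lt {m : ℕ} (w : Equiv.Perm (Fin m)) {j : ℕ} (h : j < m) :
    valN w j = (w ⟨j, h⟩ : ℕ) + 1 := by
  unfold valN pVal
  rw [dif_pos ⟨by omega, by omega⟩]
  have : (⟨j + 1 - 1, by omega⟩ : Fin m) = ⟨j, h⟩ := by simp
  rw [this]
lemma valN_le {m : ℕ} (w : Equiv.Perm (Fin m)) {j : ℕ} (h : j < m) :
    valN w j ≤ m := by
  rw [valN_lt w h]; have := (w ⟨j, h⟩).isLt; omega
def DS {m : ℕ} (w : Equiv.Perm (Fin m)) : Finset ℕ :=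
  (Finset.range (m - 1)).filter fun j => valN w (j + 1) < valN w j
lemma mem_DS_iff {m : ℕ} (w : Equiv.Perm (Fin m)) (j : ℕ) :
    j ∈ DS w ↔ j < m - 1 ∧ valN w (j + 1) < valN w j := by simp [DS]

lemma card_pDesSet {m : ℕ} (w : Equiv.Perm (Fin m)) :
    (pDesSet w).card = (DS w).card := by
  refine Finset.card_bij' (fun i _ => i - 1) (fun j _ => j + 1) ?_ ?_ ?_ ?_
  · intro i hi
    simp only [pDesSet, mem_filter, mem_Icc] at hi
    obtain ⟨⟨h1, h2⟩, h3⟩ := hi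
    show i - 1 ∈ DS w
    rw [mem_DS_iff]
    refine ⟨by omega, ?_⟩
    unfold valN
    have e1 : i - 1 + 1 + 1 = i + 1 := by omega
    have e2 : i - 1 + 1 = i := by omega
    rw [e1, e2]
    exact h3
  · intro j hj
    rw [mem_DS_iff] at hj
    show j + 1 ∈ pDesSet w
    simp only [pDesSet, mem_filter, mem_Icc]
    refine ⟨⟨by omega, by omega⟩, ?_⟩
    exact hj.2
  · intro i hi
    simp only [pDesSet, mem_filter, mem_Icc] at hi
    show i - 1 + 1 = i
    omega
  · intro j hj
    show j + 1 - 1 = j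
    omega

def ins {m : ℕ} (w : Equiv.Perm (Fin m)) (p : Fin (m + 1)) : Equiv.Perm (Fin (m + 1)) :=
  (finSuccEquiv' p).trans ((Equiv.optionCongr w).trans finSuccEquivLast.symm)
lemma ins_apply_at {m : ℕ} (w : Equiv.Perm (Fin m)) (p : Fin (m + 1)) :
    ins w p p = Fin.last m := by simp [ins, finSuccEquiv'_at]
lemma ins_apply_succAbove {m : ℕ} (w : Equiv.Perm (Fin m)) (p : Fin (m + 1)) (j : Fin m) :
    ins w p (p.succAbove j) = (w j).castSucc := by simp [ins, finSuccEquiv'_succAbove]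
lemma valN_ins {m : ℕ} (w : Equiv.Perm (Fin m)) (p : Fin (m + 1)) {j : ℕ} (hj : j ≤ m) :
    valN (ins w p) j =
      if j < (p : ℕ) then valN w j
      else if j = (p : ℕ) then m + 1
      else valN w (j - 1) := by
  have hpm := p.isLt
  rcases lt_trichotomy j (p : ℕ) with h | h | h
  · rw [if_pos h]
    have hjm : j < m := by omega
    rw [valN_lt _ (show j < m + 1 by omega), valN_lt w hjm]
    have key : (⟨j, show j < m + 1 by omega⟩ : Fin (m + 1)) =
        p.succAbove ⟨j, hjm⟩ := by
      rw [Fin.succAbove_of_castSucc_lt p _ (by simpa [Fin.lt_def] using h)]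
      rfl
    rw [key, ins_apply_succAbove]; rfl
  · rw [if_neg (by omega), if_pos h]
    rw [valN_lt _ (show j < m + 1 by omega)]
    have key : (⟨j, show j < m + 1 by omega⟩ : Fin (m + 1)) = p := Fin.ext h
    rw [key, ins_apply_at]; rfl
  · rw [if_neg (by omega), if_neg (by omega)]
    have hjm : j - 1 < m := by omega
    rw [valN_lt _ (show j < m + 1 by omega), valN_lt w hjm]
    have key : (⟨j, show j < m + 1 by omega⟩ : Fin (m + 1)) =
        p.succAbove ⟨j - 1, hjm⟩ := by
      rw [Fin.succAbove_of_le_castSucc p _ (by simp [Fin.le_def]; omega)]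
      exact Fin.ext (by simp [Fin.succ]; omega)
    rw [key, ins_apply_succAbove]; rfl

lemma mem_DS_ins_iff {m : ℕ} (w : Equiv.Perm (Fin m)) (p : Fin (m + 1)) (j : ℕ) :
    j ∈ DS (ins w p) ↔
      (j ∈ DS w ∧ j + 1 < (p : ℕ)) ∨ ((p : ℕ) < m ∧ j = (p : ℕ)) ∨
        ((p : ℕ) < j ∧ j < m ∧ j - 1 ∈ DS w) := by
  have hpm := p.isLt
  rw [mem_DS_iff]
  have hm1 : m + 1 - 1 = m := by omega
  rw [hm1]
  constructor
  · rintro ⟨hjm, hlt⟩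
    rw [valN_ins w p (by omega : j ≤ m), valN_ins w p (by omega : j + 1 ≤ m)] at hlt
    rcases lt_trichotomy (j + 1) (p : ℕ) with h | h | h
    · left
      rw [if_pos h, if_pos (by omega)] at hlt
      exact ⟨(mem_DS_iff w j).2 ⟨by omega, hlt⟩, h⟩
    · exfalso
      rw [if_neg (by omega), if_pos h, if_pos (by omega)] at hlt
      have := valN_le w (show j < m by omega)
      omega
    · rcases lt_trichotomy j (p : ℕ) with h2 | h2 | h2
      · omega
      · right; left; exact ⟨by omega, h2⟩
      · right; right
        rw [if_neg (by omega), if_neg (by omega), if_neg (by omega),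
          if_neg (by omega)] at hlt
        have e1 : j + 1 - 1 = j := by omega
        rw [e1] at hlt
        have e2 : j - 1 + 1 = j := by omega
        refine ⟨h2, hjm, (mem_DS_iff w (j - 1)).2 ⟨by omega, ?_⟩⟩
        rw [e2]
        exact hlt
  · intro hcl
    have hjm : j < m := by
      rcases hcl with ⟨hj, h⟩ | ⟨h1, h2⟩ | ⟨h1, h2, h3⟩
      · have := (mem_DS_iff w j).1 hj; omega
      · omega
      · omega
    refine ⟨hjm, ?_⟩
    rw [valN_ins w p (by omega : j ≤ m), valN_ins w p (by omega : j + 1 ≤ m)]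
    rcases hcl with ⟨hj, h⟩ | ⟨h1, h2⟩ | ⟨h1, h2, h3⟩
    · rw [if_pos h, if_pos (by omega)]
      exact ((mem_DS_iff w j).1 hj).2
    · rw [if_neg (by omega), if_neg (by omega), if_neg (by omega), if_pos h2]
      have e1 : j + 1 - 1 = j := by omega
      rw [e1]
      have := valN_le w (show j < m by omega)
      omega
    · rw [if_neg (by omega), if_neg (by omega), if_neg (by omega), if_neg (by omega)]
      have e1 : j + 1 - 1 = j := by omega
      rw [e1]
      have h4 := ((mem_DS_iff w (j - 1)).1 h3).2
      have e2 : j - 1 + 1 = j := by omega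
      rw [e2] at h4
      exact h4

lemma card_DS_ins {m : ℕ} (w : Equiv.Perm (Fin m)) (p : Fin (m + 1)) :
    (DS (ins w p)).card = (DS w).card +
      (if (p : ℕ) = m ∨ (0 < (p : ℕ) ∧ (p : ℕ) - 1 ∈ DS w) then 0 else 1) := by
  have hpm : (p : ℕ) ≤ m := by have := p.isLt; omega
  set P := (p : ℕ) with hP
  -- the three pieces
  set S1 := (DS w).filter (fun j => j + 1 < P) with hS1
  set S2 := (if P < m then ({P} : Finset ℕ) else ∅) with hS2
  set S3 := ((DS w).filter (fun j => P ≤ j)).image (· + 1) with hS3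
  set SM := (DS w).filter (fun j => j + 1 = P) with hSM
  have hset : DS (ins w p) = S1 ∪ (S2 ∪ S3) := by
    ext j
    rw [mem_DS_ins_iff]
    simp only [hS1, hS2, hS3, mem_union, mem_filter, mem_image]
    constructor
    · rintro (⟨h1, h2⟩ | ⟨h1, h2⟩ | ⟨h1, h2, h3⟩)
      · exact Or.inl ⟨h1, h2⟩
      · refine Or.inr (Or.inl ?_)
        rw [if_pos h1]
        simp [h2]
        exact hP.symm
      · refine Or.inr (Or.inr ⟨j - 1, ⟨h3, by omega⟩, by omega⟩)
    · rintro (⟨h1, h2⟩ | h | ⟨a, ⟨ha1, ha2⟩, ha3⟩)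
      · exact Or.inl ⟨h1, h2⟩
      · by_cases hPm : P < m
        · rw [if_pos hPm] at h
          simp only [mem_singleton] at h
          exact Or.inr (Or.inl ⟨hPm, h⟩)
        · rw [if_neg hPm] at h
          simp at h
      · have hb := (mem_DS_iff w a).1 ha1
        refine Or.inr (Or.inr ⟨by omega, by omega, ?_⟩)
        have : j - 1 = a := by omega
        rw [this]; exact ha1
  have hd1 : Disjoint S1 (S2 ∪ S3) := by
    rw [Finset.disjoint_left]
    intro j hj hj2
    simp only [hS1, mem_filter] at hj
    rcases Finset.mem_union.1 hj2 with h | h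
    · by_cases hPm : P < m
      · rw [hS2, if_pos hPm] at h; simp only [mem_singleton] at h; omega
      · rw [hS2, if_neg hPm] at h; simp at h
    · simp only [hS3, mem_image, mem_filter] at h
      obtain ⟨a, ⟨_, ha⟩, ha2⟩ := h
      omega
  have hd2 : Disjoint S2 S3 := by
    rw [Finset.disjoint_left]
    intro j hj hj2
    simp only [hS3, mem_image, mem_filter] at hj2
    obtain ⟨a, ⟨_, ha⟩, ha2⟩ := hj2
    by_cases hPm : P < m
    · rw [hS2, if_pos hPm] at hj; simp only [mem_singleton] at hj; omega
    · rw [hS2, if_neg hPm] at hj; simp at hj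
  have hcard : (DS (ins w p)).card = S1.card + (S2.card + S3.card) := by
    rw [hset, card_union_of_disjoint hd1, card_union_of_disjoint hd2]
  have hc3 : S3.card = ((DS w).filter (fun j => P ≤ j)).card :=
    Finset.card_image_of_injective _ (fun a b h => by omega)
  have hpart : DS w = S1 ∪ (SM ∪ (DS w).filter (fun j => P ≤ j)) := by
    ext j
    simp only [hS1, hSM, mem_union, mem_filter]
    constructor
    · intro hj
      rcases lt_trichotomy (j + 1) P with h | h | h
      · exact Or.inl ⟨hj, h⟩
      · exact Or.inr (Or.inl ⟨hj, h⟩)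
      · exact Or.inr (Or.inr ⟨hj, by omega⟩)
    · rintro (⟨h, _⟩ | ⟨h, _⟩ | ⟨h, _⟩) <;> exact h
  have hdp1 : Disjoint S1 (SM ∪ (DS w).filter (fun j => P ≤ j)) := by
    rw [Finset.disjoint_left]
    intro j hj hj2
    simp only [hS1, mem_filter] at hj
    rcases Finset.mem_union.1 hj2 with h | h <;>
      simp only [hSM, mem_filter] at h <;> omega
  have hdp2 : Disjoint SM ((DS w).filter (fun j => P ≤ j)) := by
    rw [Finset.disjoint_left]
    intro j hj hj2
    simp only [hSM, mem_filter] at hj hj2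
    omega
  have hwcard : (DS w).card = S1.card + (SM.card + ((DS w).filter (fun j => P ≤ j)).card) := by
    conv_lhs => rw [hpart]
    rw [card_union_of_disjoint hdp1, card_union_of_disjoint hdp2]
  have hSMval : SM.card = if 0 < P ∧ P - 1 ∈ DS w then 1 else 0 := by
    by_cases hc : 0 < P ∧ P - 1 ∈ DS w
    · rw [if_pos hc]
      have : SM = {P - 1} := by
        ext j
        simp only [hSM, mem_filter, mem_singleton]
        constructor
        · rintro ⟨h1, h2⟩; omega
        · intro h
          subst h
          exact ⟨hc.2, by omega⟩
      rw [this, card_singleton]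
    · rw [if_neg hc]
      have : SM = ∅ := by
        ext j
        simp only [hSM, mem_filter, notMem_empty, iff_false]
        rintro ⟨h1, h2⟩
        have : j = P - 1 := by omega
        subst this
        exact hc ⟨by omega, h1⟩
      rw [this, card_empty]
  have hS2val : S2.card = if P < m then 1 else 0 := by
    by_cases hPm : P < m
    · rw [hS2, if_pos hPm, if_pos hPm, card_singleton]
    · rw [hS2, if_neg hPm, if_neg hPm, card_empty]
  -- P - 1 ∈ DS w implies P < m
  have hbound : (0 < P ∧ P - 1 ∈ DS w) → P < m := by
    rintro ⟨h1, h2⟩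
    have := (mem_DS_iff w (P - 1)).1 h2
    omega
  rw [hcard, hc3, hS2val]
  rw [hwcard, hSMval]
  by_cases hc : 0 < P ∧ P - 1 ∈ DS w
  · have hPm : P < m := hbound hc
    rw [if_pos hc, if_pos hPm, if_pos (Or.inr hc)]
    ring
  · rw [if_neg hc]
    by_cases hPm : P = m
    · rw [if_neg (by omega), if_pos (Or.inl hPm)]
      ring
    · rw [if_pos (by omega), if_neg (by
        rintro (h | h)
        · exact hPm h
        · exact hc h)]
      ring

lemma ins_bijective {m : ℕ} :
    Function.Bijective (fun wp : Equiv.Perm (Fin m) × Fin (m + 1) => ins wp.1 wp.2) := by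
  rw [Fintype.bijective_iff_injective_and_card]
  constructor
  · rintro ⟨w, p⟩ ⟨w', p'⟩ h
    simp only at h
    have hp : p = p' := by
      have h1 : ins w p p = Fin.last m := ins_apply_at w p
      have h2 : ins w p p' = Fin.last m := by rw [h]; exact ins_apply_at w' p'
      exact (ins w p).injective (h1.trans h2.symm)
    subst hp
    have hw : w = w' := by
      apply Equiv.ext
      intro j
      have h3 := DFunLike.congr_fun h (p.succAbove j)
      rw [ins_apply_succAbove, ins_apply_succAbove] at h3
      exact Fin.castSucc_injective _ h3
    rw [hw]
  · rw [Fintype.card_prod, Fintype.card_perm, Fintype.card_perm, Fintype.card_fin,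
      Fintype.card_fin, Nat.factorial_succ, Nat.mul_comm]

open Fin.NatCast in
lemma card_keep {m : ℕ} (w : Equiv.Perm (Fin m)) :
    ((univ : Finset (Fin (m + 1))).filter
      (fun p : Fin (m + 1) => (p : ℕ) = m ∨ (0 < (p : ℕ) ∧ (p : ℕ) - 1 ∈ DS w))).card
      = (DS w).card + 1 := by
  have hset : (univ : Finset (Fin (m + 1))).filter
      (fun p : Fin (m + 1) => (p : ℕ) = m ∨ (0 < (p : ℕ) ∧ (p : ℕ) - 1 ∈ DS w)) =
      insert (Fin.last m) ((DS w).image (fun j => ((j + 1 : ℕ) : Fin (m + 1)))) := by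
    ext p
    simp only [mem_filter, mem_univ, true_and, mem_insert, mem_image]
    constructor
    · rintro (h | ⟨h1, h2⟩)
      · exact Or.inl (Fin.ext (by simpa using h))
      · refine Or.inr ⟨(p : ℕ) - 1, h2, ?_⟩
        have hb := (mem_DS_iff w ((p : ℕ) - 1)).1 h2
        apply Fin.ext
        rw [Fin.val_natCast]
        have : (p : ℕ) - 1 + 1 = (p : ℕ) := by omega
        rw [this]
        exact Nat.mod_eq_of_lt p.isLt
    · rintro (h | ⟨j, hj, hj2⟩)
      · exact Or.inl (by rw [h]; simp)
      · have hb := (mem_DS_iff w j).1 hj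
        have hval : (p : ℕ) = j + 1 := by
          have h3 := congrArg Fin.val hj2
          rw [Fin.val_natCast, Nat.mod_eq_of_lt (show j + 1 < m + 1 by omega)] at h3
          omega
        have hpos : 0 < (p : ℕ) := by omega
        refine Or.inr ⟨hpos, ?_⟩
        have : (p : ℕ) - 1 = j := by omega
        rw [this]
        exact hj
  rw [hset]
  rw [Finset.card_insert_of_notMem, Finset.card_image_of_injOn]
  · intro a ha b hb hab
    have hba := (mem_DS_iff w a).1 ha
    have hbb := (mem_DS_iff w b).1 hb
    have : ((a + 1 : ℕ) : Fin (m + 1)).val = ((b + 1 : ℕ) : Fin (m + 1)).val :=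
      congrArg Fin.val hab
    rw [Fin.val_natCast, Fin.val_natCast, Nat.mod_eq_of_lt (by omega),
      Nat.mod_eq_of_lt (by omega)] at this
    omega
  · intro hmem
    simp only [mem_image] at hmem
    obtain ⟨j, hj, hj2⟩ := hmem
    have hb := (mem_DS_iff w j).1 hj
    have : ((j + 1 : ℕ) : Fin (m + 1)).val = (Fin.last m).val := by rw [hj2]
    rw [Fin.val_natCast, Nat.mod_eq_of_lt (by omega), Fin.val_last] at this
    omega

lemma pow_helper (d m : ℕ) (h : d ≤ m) :
    ((d + 1) • X ^ d + (m - d) • X ^ (d + 1) : ℤ[X]) =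
      (1 + (m : ℤ[X]) * X) * X ^ d + X * (1 - X) * derivative (X ^ d : ℤ[X]) := by
  rw [derivative_X_pow, nsmul_eq_mul, nsmul_eq_mul]
  rcases Nat.eq_zero_or_pos d with hd | hd
  · subst hd
    simp
  · have hX : X * (X : ℤ[X]) ^ (d - 1) = X ^ d := by
      rw [← pow_succ']
      congr 1
      omega
    have hC : (Polynomial.C (d : ℤ)) = ((d : ℕ) : ℤ[X]) := by
      simp
    rw [hC]
    have expand : X * (1 - X) * (((d : ℕ) : ℤ[X]) * X ^ (d - 1)) =
        (1 - X) * ((d : ℕ) : ℤ[X]) * X ^ d := by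
      rw [← hX]; ring
    rw [expand]
    push_cast [Nat.cast_sub h]
    ring

lemma eulerian_rec (m : ℕ) :
    eulerianPoly (m + 1) =
      (1 + (m : ℤ[X]) * X) * eulerianPoly m
        + X * (1 - X) * derivative (eulerianPoly m) := by
  have step1 : eulerianPoly (m + 1) =
      ∑ wp : Equiv.Perm (Fin m) × Fin (m + 1), X ^ (DS (ins wp.1 wp.2)).card := by
    unfold eulerianPoly
    exact (Fintype.sum_bijective _ ins_bijective _ _
      (fun wp => by rw [card_pDesSet])).symm
  rw [step1, Fintype.sum_prod_type]
  have inner : ∀ w : Equiv.Perm (Fin m),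
      (∑ p : Fin (m + 1), (X : ℤ[X]) ^ (DS (ins w p)).card) =
        ((DS w).card + 1) • X ^ (DS w).card
          + (m - (DS w).card) • X ^ ((DS w).card + 1) := by
    intro w
    have hpt : ∀ p : Fin (m + 1), (X : ℤ[X]) ^ (DS (ins w p)).card =
        if ((p : ℕ) = m ∨ (0 < (p : ℕ) ∧ (p : ℕ) - 1 ∈ DS w)) then
          X ^ (DS w).card else X ^ ((DS w).card + 1) := by
      intro p
      rw [card_DS_ins]
      by_cases hc : ((p : ℕ) = m ∨ (0 < (p : ℕ) ∧ (p : ℕ) - 1 ∈ DS w))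
      · rw [if_pos hc, if_pos hc, Nat.add_zero]
      · rw [if_neg hc, if_neg hc]
    rw [Finset.sum_congr rfl (fun p _ => hpt p), Finset.sum_ite,
      Finset.sum_const, Finset.sum_const, card_keep]
    have hnot : ((univ : Finset (Fin (m + 1))).filter
        (fun p : Fin (m + 1) => ¬((p : ℕ) = m ∨ (0 < (p : ℕ) ∧ (p : ℕ) - 1 ∈ DS w)))).card
        = m - (DS w).card := by
      have hall := Finset.card_filter_add_card_filter_not
        (s := (univ : Finset (Fin (m + 1))))
        (p := fun p : Fin (m + 1) => (p : ℕ) = m ∨ (0 < (p : ℕ) ∧ (p : ℕ) - 1 ∈ DS w))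
      rw [card_keep, Finset.card_univ, Fintype.card_fin] at hall
      omega
    rw [hnot]
  rw [Finset.sum_congr rfl (fun w _ => inner w)]
  have hle : ∀ w : Equiv.Perm (Fin m), (DS w).card ≤ m := by
    intro w
    have h1 : (DS w).card ≤ (range (m - 1)).card := by
      apply Finset.card_le_card
      intro j hj
      rw [mem_DS_iff] at hj
      simp only [mem_range]
      omega
    rw [Finset.card_range] at h1
    omega
  rw [Finset.sum_congr rfl (fun w _ => pow_helper (DS w).card m (hle w))]
  rw [Finset.sum_add_distrib, ← Finset.mul_sum, ← Finset.mul_sum]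
  have heq : eulerianPoly m = ∑ w : Equiv.Perm (Fin m), (X : ℤ[X]) ^ (DS w).card := by
    unfold eulerianPoly
    exact Finset.sum_congr rfl (fun w _ => by rw [card_pDesSet])
  rw [heq, derivative_sum]

lemma pDesSet_card_zero {m : ℕ} (hm : m ≤ 1) (w : Equiv.Perm (Fin m)) :
    (pDesSet w).card = 0 := by
  have h : Finset.Icc 1 (m - 1) = ∅ := by
    apply Finset.Icc_eq_empty
    omega
  simp [pDesSet, h]

lemma eulerianPoly_of_le_one {m : ℕ} (hm : m ≤ 1) : eulerianPoly m = 1 := by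
  unfold eulerianPoly
  rw [Finset.sum_congr rfl (fun w _ => by rw [pDesSet_card_zero hm w, pow_zero])]
  rw [Finset.sum_const, Finset.card_univ, Fintype.card_perm, Fintype.card_fin]
  have : m.factorial = 1 := by interval_cases m <;> rfl
  rw [this, one_smul]

lemma term_helper (k e : ℕ) (A dA : ℤ[X]) :
    ((1 + (k : ℤ[X]) * X) * A + X * (1 - X) * dA) * (X - 1) ^ e
      = (1 + ((k + e : ℕ) : ℤ[X]) * X) * (A * (X - 1) ^ e)
        + X * (1 - X) * (dA * (X - 1) ^ e + A * ((e : ℤ[X]) * (X - 1) ^ (e - 1))) := by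
  cases e with
  | zero => push_cast; ring
  | succ e' =>
    have h1 : (X - 1 : ℤ[X]) ^ (e' + 1) = (X - 1) ^ e' * (X - 1) := pow_succ _ _
    have h2 : e' + 1 - 1 = e' := rfl
    rw [h2, h1]
    push_cast
    ring

lemma eulerian_eq_B (n : ℕ) (hn : 1 ≤ n) :
    eulerianPoly n
      = ∑ k ∈ range n, (n.choose k : ℤ[X]) * eulerianPoly k * (X - 1) ^ (n - 1 - k) := by
  induction n, hn using Nat.le_induction with
  | base => simp [eulerianPoly_of_le_one]
  | succ n hn IH =>
    obtain ⟨N, rfl⟩ : ∃ N, n = N + 1 := ⟨n - 1, by omega⟩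
    simp only [Nat.add_sub_cancel] at IH ⊢
    -- IH : eulerianPoly (N+1) = ∑ k ∈ range (N+1), C(N+1,k) * A_k * (X-1)^(N-k)
    -- goal : eulerianPoly (N+2) = ∑ k ∈ range (N+2), C(N+2,k) * A_k * (X-1)^(N+1-k)
    rw [Finset.sum_range_succ']
    have hf0 : ((N + 1 + 1).choose 0 : ℤ[X]) * eulerianPoly 0 * (X - 1) ^ (N + 1 - 0)
        = (X - 1) ^ (N + 1) := by
      rw [Nat.choose_zero_right, eulerianPoly_of_le_one (by norm_num)]
      push_cast
      ring_nf
    rw [hf0]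
    have hsplit : ∀ i ∈ range (N + 1),
        ((N + 1 + 1).choose (i + 1) : ℤ[X]) * eulerianPoly (i + 1) * (X - 1) ^ (N + 1 - (i + 1))
          = ((N + 1).choose i : ℤ[X]) * eulerianPoly (i + 1) * (X - 1) ^ (N - i)
            + ((N + 1).choose (i + 1) : ℤ[X]) * eulerianPoly (i + 1) * (X - 1) ^ (N - i) := by
      intro i hi
      have he : N + 1 - (i + 1) = N - i := by omega
      rw [he, Nat.choose_succ_succ (N + 1) i]
      push_cast
      ring
    rw [Finset.sum_congr rfl hsplit, Finset.sum_add_distrib]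
    -- T1 + T2 + (X-1)^(N+1); show T2 + (X-1)^(N+1) = X * A (N+1),
    -- and A (N+2) = T1 + X * A (N+1)
    have hT2 : (∑ i ∈ range (N + 1),
          ((N + 1).choose (i + 1) : ℤ[X]) * eulerianPoly (i + 1) * (X - 1) ^ (N - i))
          + (X - 1) ^ (N + 1) = X * eulerianPoly (N + 1) := by
      have hzero : ((N + 1).choose 0 : ℤ[X]) * eulerianPoly 0 * (X - 1) ^ (N + 1 - 0)
          = (X - 1) ^ (N + 1) := by
        rw [Nat.choose_zero_right, eulerianPoly_of_le_one (by norm_num)]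
        push_cast
        ring_nf
      have hstep : ∀ i ∈ range (N + 1),
          ((N + 1).choose (i + 1) : ℤ[X]) * eulerianPoly (i + 1) * (X - 1) ^ (N + 1 - (i + 1))
            = ((N + 1).choose (i + 1) : ℤ[X]) * eulerianPoly (i + 1) * (X - 1) ^ (N - i) := by
        intro i hi
        have he : N + 1 - (i + 1) = N - i := by omega
        rw [he]
      calc (∑ i ∈ range (N + 1),
              ((N + 1).choose (i + 1) : ℤ[X]) * eulerianPoly (i + 1) * (X - 1) ^ (N - i))
            + (X - 1) ^ (N + 1)
          = ∑ j ∈ range (N + 2),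
              ((N + 1).choose j : ℤ[X]) * eulerianPoly j * (X - 1) ^ (N + 1 - j) := by
            rw [Finset.sum_range_succ' (fun j =>
              ((N + 1).choose j : ℤ[X]) * eulerianPoly j * (X - 1) ^ (N + 1 - j)) (N + 1)]
            rw [hzero, Finset.sum_congr rfl hstep]
        _ = (∑ j ∈ range (N + 1),
              ((N + 1).choose j : ℤ[X]) * eulerianPoly j * (X - 1) ^ (N + 1 - j))
              + eulerianPoly (N + 1) := by
            rw [Finset.sum_range_succ]
            simp
        _ = (X - 1) * eulerianPoly (N + 1) + eulerianPoly (N + 1) := by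
            congr 1
            have hpow : ∀ j ∈ range (N + 1),
                ((N + 1).choose j : ℤ[X]) * eulerianPoly j * (X - 1) ^ (N + 1 - j)
                  = (X - 1) * (((N + 1).choose j : ℤ[X]) * eulerianPoly j * (X - 1) ^ (N - j)) := by
              intro j hj
              simp only [mem_range] at hj
              have he : N + 1 - j = (N - j) + 1 := by omega
              rw [he, pow_succ]
              ring
            rw [Finset.sum_congr rfl hpow, ← Finset.mul_sum, ← IH]
        _ = X * eulerianPoly (N + 1) := by ring
    conv_rhs => rw [add_assoc]
    rw [hT2]
    -- remaining : A (N+2) = T1 + X * A (N+1)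
    have hd : derivative (eulerianPoly (N + 1))
        = ∑ k ∈ range (N + 1), ((N + 1).choose k : ℤ[X]) *
            (derivative (eulerianPoly k) * (X - 1) ^ (N - k)
              + eulerianPoly k * (((N - k : ℕ) : ℤ[X]) * (X - 1) ^ (N - k - 1))) := by
      conv_lhs => rw [IH]
      rw [derivative_sum]
      refine Finset.sum_congr rfl fun k hk => ?_
      rw [derivative_mul, derivative_mul, derivative_natCast, derivative_pow]
      have hder1 : derivative (X - 1 : ℤ[X]) = 1 := by
        rw [derivative_sub, derivative_X, derivative_one, sub_zero]
      rw [hder1]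
      have hC : (Polynomial.C ((N - k : ℕ) : ℤ)) = (((N - k : ℕ)) : ℤ[X]) := by
        simp
      rw [hC]
      ring
    rw [eulerian_rec (N + 1), hd]
    conv_lhs => rw [IH]
    rw [Finset.mul_sum, Finset.mul_sum, ← Finset.sum_add_distrib]
    conv_rhs => rw [IH, Finset.mul_sum, ← Finset.sum_add_distrib]
    refine Finset.sum_congr rfl fun k hk => ?_
    simp only [mem_range] at hk
    have hkN : k ≤ N := by omega
    rw [eulerian_rec k]
    have hth := term_helper k (N - k) (eulerianPoly k) (derivative (eulerianPoly k))
    have hke : k + (N - k) = N := by omega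
    rw [hke] at hth
    -- goal: (1+(N+1+? )X) * (C * A * q) + X(1-X)*(C*(dA q + A e q'))
    --        = C * ((1+kX)A + X(1-X)dA) * q + X * (C * A * q)
    have expand : ((N + 1).choose k : ℤ[X]) *
        ((1 + (k : ℤ[X]) * X) * eulerianPoly k + X * (1 - X) * derivative (eulerianPoly k))
        * (X - 1) ^ (N - k)
        = ((N + 1).choose k : ℤ[X]) *
          ((1 + (N : ℤ[X]) * X) * (eulerianPoly k * (X - 1) ^ (N - k))
            + X * (1 - X) * (derivative (eulerianPoly k) * (X - 1) ^ (N - k)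
              + eulerianPoly k * (((N - k : ℕ) : ℤ[X]) * (X - 1) ^ (N - k - 1)))) := by
      rw [mul_assoc, hth]
    rw [expand]
    push_cast
    ring


lemma chooseid (n m j : ℕ) :
    n.choose (m + j) * (m + j).choose m = n.choose m * (n - m).choose j := by
  by_cases h : m + j ≤ n
  · have h2 := Nat.choose_mul (n := n) (k := m + j) (s := m) (Nat.le_add_right m j)
    simpa using h2
  · rw [Nat.choose_eq_zero_of_lt (show n < m + j by omega), Nat.zero_mul]
    by_cases hm : m ≤ n
    · rw [Nat.choose_eq_zero_of_lt (show n - m < j by omega), Nat.mul_zero]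
    · rw [Nat.choose_eq_zero_of_lt (show n < m by omega), Nat.zero_mul]

lemma hXpow (M : ℕ) :
    (X : ℤ[X]) ^ M = ∑ j ∈ range (M + 1), (M.choose j : ℤ[X]) * (X - 1) ^ j := by
  have h := add_pow (X - 1 : ℤ[X]) 1 M
  rw [sub_add_cancel] at h
  rw [h]
  refine Finset.sum_congr rfl fun j hj => ?_
  rw [one_pow]
  ring

end BE


open BE in
/-- For every positive integer `n`, the two expressions for the binomial
Eulerian polynomial agree:
`1 + t·Σ_{m=1}^n C(n,m) A_m(t) = Σ_{m=0}^n C(n,m) t^{n−m} A_m(t)`. -/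
theorem binomEulerian_two_defs (n : ℕ) (hn : 1 ≤ n) :
    1 + X * ∑ m ∈ Icc 1 n, (n.choose m : ℤ[X]) * eulerianPoly m =
      ∑ m ∈ range (n + 1), (n.choose m : ℤ[X]) * X ^ (n - m) * eulerianPoly m := by
  have key : ∑ m ∈ range (n + 1), (n.choose m : ℤ[X]) * X ^ (n - m) * eulerianPoly m
      = 1 + X * ∑ m ∈ Icc 1 n, (n.choose m : ℤ[X]) * eulerianPoly m := by
    have step1 : ∀ m ∈ range (n + 1),
        (n.choose m : ℤ[X]) * X ^ (n - m) * eulerianPoly m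
          = ∑ k ∈ range (n + 1),
              ((n.choose k * k.choose m : ℕ) : ℤ[X]) * eulerianPoly m * (X - 1) ^ (k - m) := by
      intro m hm
      simp only [mem_range] at hm
      have hmn : m ≤ n := by omega
      rw [hXpow (n - m), Finset.mul_sum, Finset.sum_mul]
      -- now : ∑ j ∈ range (n - m + 1), (C(n,m) * (C(n-m,j)*(X-1)^j)) * A_m
      have e1 : ∀ j ∈ range (n - m + 1),
          (n.choose m : ℤ[X]) * (((n - m).choose j : ℤ[X]) * (X - 1) ^ j) * eulerianPoly m
            = ((n.choose m * (n - m).choose j : ℕ) : ℤ[X]) * eulerianPoly m * (X - 1) ^ j := by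
        intro j hj
        push_cast
        ring
      rw [Finset.sum_congr rfl e1]
      have e2 : ∑ j ∈ range (n - m + 1),
          ((n.choose m * (n - m).choose j : ℕ) : ℤ[X]) * eulerianPoly m * (X - 1) ^ j
          = ∑ j ∈ range (n + 1),
          ((n.choose m * (n - m).choose j : ℕ) : ℤ[X]) * eulerianPoly m * (X - 1) ^ j := by
        apply Finset.sum_subset
        · apply Finset.range_subset_range.2
          omega
        · intro j hj hj2
          simp only [mem_range] at hj hj2
          rw [Nat.choose_eq_zero_of_lt (show n - m < j by omega), Nat.mul_zero]
          simp
      rw [e2]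
      -- reindex j ↦ k = m + j
      have e3 : ∀ j ∈ range (n + 1),
          ((n.choose m * (n - m).choose j : ℕ) : ℤ[X]) * eulerianPoly m * (X - 1) ^ j
            = ((n.choose (m + j) * (m + j).choose m : ℕ) : ℤ[X]) * eulerianPoly m
                * (X - 1) ^ ((m + j) - m) := by
        intro j hj
        rw [chooseid n m j]
        congr 2
        omega
      rw [Finset.sum_congr rfl e3]
      have e4 : ∑ j ∈ range (n + 1),
          ((n.choose (m + j) * (m + j).choose m : ℕ) : ℤ[X]) * eulerianPoly m
            * (X - 1) ^ ((m + j) - m)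
          = ∑ k ∈ Ico m (m + (n + 1)),
          ((n.choose k * k.choose m : ℕ) : ℤ[X]) * eulerianPoly m * (X - 1) ^ (k - m) := by
        rw [Finset.sum_Ico_eq_sum_range]
        have : m + (n + 1) - m = n + 1 := by omega
        rw [this]
      rw [e4]
      have e5 : ∑ k ∈ Ico m (m + (n + 1)),
          ((n.choose k * k.choose m : ℕ) : ℤ[X]) * eulerianPoly m * (X - 1) ^ (k - m)
          = ∑ k ∈ range (m + n + 1),
          ((n.choose k * k.choose m : ℕ) : ℤ[X]) * eulerianPoly m * (X - 1) ^ (k - m) := by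
        apply Finset.sum_subset
        · intro k hk
          simp only [mem_Ico] at hk
          simp only [mem_range]
          omega
        · intro k hk hk2
          simp only [mem_range] at hk
          simp only [mem_Ico] at hk2
          rw [Nat.choose_eq_zero_of_lt (show k < m by omega), Nat.mul_zero]
          simp
      have e6 : ∑ k ∈ range (n + 1),
          ((n.choose k * k.choose m : ℕ) : ℤ[X]) * eulerianPoly m * (X - 1) ^ (k - m)
          = ∑ k ∈ range (m + n + 1),
          ((n.choose k * k.choose m : ℕ) : ℤ[X]) * eulerianPoly m * (X - 1) ^ (k - m) := by
        apply Finset.sum_subset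
        · apply Finset.range_subset_range.2
          omega
        · intro k hk hk2
          simp only [mem_range] at hk hk2
          rw [Nat.choose_eq_zero_of_lt (show n < k by omega), Nat.zero_mul]
          simp
      rw [e5, ← e6]
    rw [Finset.sum_congr rfl step1, Finset.sum_comm]
    -- now : ∑ k ∈ range (n+1), ∑ m ∈ range (n+1), coef * A_m * (X-1)^(k-m)
    have step5 : ∀ k ∈ range (n + 1),
        (∑ m ∈ range (n + 1),
          ((n.choose k * k.choose m : ℕ) : ℤ[X]) * eulerianPoly m * (X - 1) ^ (k - m))
          = (n.choose k : ℤ[X]) * (if k = 0 then 1 else X * eulerianPoly k) := by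
      intro k hk
      simp only [mem_range] at hk
      have hcut : ∑ m ∈ range (n + 1),
          ((n.choose k * k.choose m : ℕ) : ℤ[X]) * eulerianPoly m * (X - 1) ^ (k - m)
          = ∑ m ∈ range (k + 1),
          ((n.choose k * k.choose m : ℕ) : ℤ[X]) * eulerianPoly m * (X - 1) ^ (k - m) := by
        symm
        apply Finset.sum_subset
        · apply Finset.range_subset_range.2
          omega
        · intro m hm hm2
          simp only [mem_range] at hm hm2
          rw [Nat.choose_eq_zero_of_lt (show k < m by omega), Nat.mul_zero]
          simp
      rw [hcut]
      have hfact : ∀ m ∈ range (k + 1),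
          ((n.choose k * k.choose m : ℕ) : ℤ[X]) * eulerianPoly m * (X - 1) ^ (k - m)
            = (n.choose k : ℤ[X]) *
                ((k.choose m : ℤ[X]) * eulerianPoly m * (X - 1) ^ (k - m)) := by
        intro m hm
        push_cast
        ring
      rw [Finset.sum_congr rfl hfact, ← Finset.mul_sum]
      congr 1
      by_cases hk0 : k = 0
      · subst hk0
        rw [if_pos rfl]
        simp [eulerianPoly_of_le_one]
      · rw [if_neg hk0]
        have hk1 : 1 ≤ k := by omega
        rw [Finset.sum_range_succ]
        have hlast : (k.choose k : ℤ[X]) * eulerianPoly k * (X - 1) ^ (k - k) = eulerianPoly k := by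
          simp
        rw [hlast]
        have hpow : ∀ m ∈ range k,
            (k.choose m : ℤ[X]) * eulerianPoly m * (X - 1) ^ (k - m)
              = (X - 1) * ((k.choose m : ℤ[X]) * eulerianPoly m * (X - 1) ^ (k - 1 - m)) := by
          intro m hm
          simp only [mem_range] at hm
          have he : k - m = (k - 1 - m) + 1 := by omega
          rw [he, pow_succ]
          ring
        rw [Finset.sum_congr rfl hpow, ← Finset.mul_sum, ← eulerian_eq_B k hk1]
        ring
    rw [Finset.sum_congr rfl step5]
    have hins : range (n + 1) = insert 0 (Icc 1 n) := by
      ext x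
      simp only [mem_range, mem_insert, mem_Icc]
      omega
    rw [hins, Finset.sum_insert (by simp)]
    rw [if_pos rfl, Nat.choose_zero_right]
    have hrest : ∀ k ∈ Icc 1 n,
        (n.choose k : ℤ[X]) * (if k = 0 then 1 else X * eulerianPoly k)
          = X * ((n.choose k : ℤ[X]) * eulerianPoly k) := by
      intro k hk
      simp only [mem_Icc] at hk
      rw [if_neg (by omega)]
      ring
    rw [Finset.sum_congr rfl hrest, ← Finset.mul_sum]
    push_cast
    ring
  exact key.symm
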